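/- Let φ : [0,∞) → ℝ be convex and continuously differentiable with φ(0) = 0, and suppose there is a positive, nonincreasing, continuous function w : [0,∞) → ℝ with φ'(r) = r·w(r) for all r ≥ 0. Then for all vectors a, b ∈ ℝ^d one has w(|a|) · (b · (b − a)) ≥ φ(|b|) − φ(|a|) + (1/2) w(|a|) |b − a|², where · denotes the euclidean inner product and |·| the euclidean norm. -/

import Mathlib

open RealInnerProductSpace

/-- Key inequality (Lemma 3.2): under conditions (C1)-(C2), with `w r = φ'(r)/r`,
for all `a, b ∈ ℝ^d` one has
`w(|a|) b·(b−a) ≥ φ(|b|) − φ(|a|) + (1/2) w(|a|) |b−a|²`. -/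
theorem stmt0 (d : ℕ) (hd : 1 ≤ d) (φ w : ℝ → ℝ)
    (hconv : ConvexOn ℝ (Set.Ici 0) φ)
    (hφ0 : φ 0 = 0)
    (hderiv : ∀ r ∈ Set.Ici (0:ℝ), HasDerivAt φ (r * w r) r)
    (hwpos : ∀ r ∈ Set.Ici (0:ℝ), 0 < w r)
    (hwanti : AntitoneOn w (Set.Ici 0))
    (hwcont : ContinuousOn w (Set.Ici 0))
    (a b : EuclideanSpace ℝ (Fin d)) :
    w ‖a‖ * ⟪b, b - a⟫ ≥ φ ‖b‖ - φ ‖a‖ + (1/2) * w ‖a‖ * ‖b - a‖^2 := by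
  set s := ‖a‖ with hs_def
  set t := ‖b‖ with ht_def
  have hs : (0:ℝ) ≤ s := norm_nonneg _
  have ht : (0:ℝ) ≤ t := norm_nonneg _
  set g : ℝ → ℝ := fun r => w s / 2 * r ^ 2 - φ r with hg
  have hgd : ∀ r ∈ Set.Ici (0:ℝ), HasDerivAt g (r * (w s - w r)) r := by
    intro r hr
    have h1 : HasDerivAt (fun r : ℝ => w s / 2 * r ^ 2) (w s / 2 * (2 * r ^ 1)) r := by
      simpa using ((hasDerivAt_pow 2 r).const_mul (w s / 2))
    have h2 := h1.sub (hderiv r hr)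
    convert h2 using 1
    · rfl
    · rfl
    · rfl
    · ring
  have key : φ t - φ s ≤ w s / 2 * (t ^ 2 - s ^ 2) := by
    have main : g s ≤ g t := by
      rcases le_total s t with hst | hst
      · have hmono : MonotoneOn g (Set.Icc s t) := by
          apply monotoneOn_of_deriv_nonneg (convex_Icc s t)
          · intro r hr
            exact (hgd r (le_trans hs hr.1)).continuousAt.continuousWithinAt
          · intro r hr
            rw [interior_Icc] at hr
            exact (hgd r (le_trans hs hr.1.le)).differentiableAt.differentiableWithinAt
          · intro r hr
            rw [interior_Icc] at hr
            have hr0 : (0:ℝ) ≤ r := le_trans hs hr.1.le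
            rw [(hgd r hr0).deriv]
            have : w r ≤ w s := hwanti hs hr0 hr.1.le
            nlinarith
        exact hmono ⟨le_refl s, hst⟩ ⟨hst, le_refl t⟩ hst
      · have hanti : AntitoneOn g (Set.Icc t s) := by
          apply antitoneOn_of_deriv_nonpos (convex_Icc t s)
          · intro r hr
            exact (hgd r (le_trans ht hr.1)).continuousAt.continuousWithinAt
          · intro r hr
            rw [interior_Icc] at hr
            exact (hgd r (le_trans ht hr.1.le)).differentiableAt.differentiableWithinAt
          · intro r hr
            rw [interior_Icc] at hr
            have hr0 : (0:ℝ) ≤ r := le_trans ht hr.1.le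
            rw [(hgd r hr0).deriv]
            have : w s ≤ w r := hwanti hr0 hs hr.2.le
            nlinarith
        exact hanti ⟨le_refl t, hst⟩ ⟨hst, le_refl s⟩ hst
    simp only [hg] at main
    linarith
  have hinner : 2 * ⟪b, b - a⟫ = t ^ 2 - s ^ 2 + ‖b - a‖ ^ 2 := by
    have h1 : ‖b - a‖ ^ 2 = ‖b‖ ^ 2 - 2 * ⟪b, a⟫ + ‖a‖ ^ 2 := norm_sub_sq_real b a
    have h2 : ⟪b, b - a⟫ = ⟪b, b⟫ - ⟪b, a⟫ := inner_sub_right b b a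
    have h3 : ⟪b, b⟫ = ‖b‖ ^ 2 := real_inner_self_eq_norm_sq b
    rw [h2, h3]
    rw [ht_def, hs_def]
    linarith
  have h4 : w s * (2 * ⟪b, b - a⟫) = w s * (t ^ 2 - s ^ 2 + ‖b - a‖ ^ 2) := by
    rw [hinner]
  nlinarith [key, h4]
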